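/- Let ρ be a probability distribution on ℝ × ℝ^d and suppose C² := E_{(a,w)∼ρ}[a² ‖w‖₁²] < ∞. Let f*(x) = E_{(a,w)∼ρ}[a σ(wᵀx)] for x ∈ [0,1]^d, where σ is ReLU. Let (a_k, w_k), k = 1,…,m, be i.i.d. samples from ρ and define f_m(x) = (1/m) ∑_{k=1}^m a_k σ(w_kᵀ x). Then for any probability distribution D on [0,1]^d, E_{samples} E_{x∼D}[ (f_m(x) − f*(x))² ] ≤ C²/m. -/

import Mathlib

open MeasureTheory

lemma pi_diag {E : Type*} [MeasureSpace E] [IsProbabilityMeasure (volume : Measure E)]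
    {m : ℕ} (u : E → ℝ) (hu2 : Integrable (fun p => u p ^ 2)) (k : Fin m) :
    ∫ θ : Fin m → E, u (θ k) ^ 2 = ∫ p, u p ^ 2 := by
  have h : ∀ θ : Fin m → E,
      u (θ k) ^ 2 = ∏ i, (if i = k then fun p => u p ^ 2 else fun _ => (1:ℝ)) (θ i) := by
    intro θ
    rw [Finset.prod_eq_single k (fun i _ hik => by simp [hik]) (by simp)]
    simp
  simp_rw [h]
  rw [integral_fintype_prod_volume_eq_prod]
  rw [Finset.prod_eq_single k (fun i _ hik => by simp [hik]) (by simp)]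
  simp


lemma pi_cross {E : Type*} [MeasureSpace E] [IsProbabilityMeasure (volume : Measure E)]
    {m : ℕ} (u : E → ℝ) (hu0 : ∫ p, u p = 0) (k l : Fin m) (hkl : k ≠ l) :
    ∫ θ : Fin m → E, u (θ k) * u (θ l) = 0 := by
  classical
  set f : Fin m → E → ℝ := fun i => if i = k then u else if i = l then u else fun _ => (1:ℝ) with hf
  have h : ∀ θ : Fin m → E, u (θ k) * u (θ l) = ∏ i, f i (θ i) := by
    intro θ
    rw [← Finset.prod_subset (Finset.subset_univ ({k, l} : Finset (Fin m)))
      (fun i _ hi => by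
        simp only [Finset.mem_insert, Finset.mem_singleton, not_or] at hi
        simp [hf, hi.1, hi.2])]
    rw [Finset.prod_pair hkl]
    simp [hf, hkl.symm]
  simp_rw [h]
  rw [integral_fintype_prod_volume_eq_prod]
  rw [← Finset.prod_subset (Finset.subset_univ ({k, l} : Finset (Fin m)))
      (fun i _ hi => by
        simp only [Finset.mem_insert, Finset.mem_singleton, not_or] at hi
        simp [hf, hi.1, hi.2])]
  rw [Finset.prod_pair hkl]
  simp [hf, hkl.symm, hu0]

lemma pi_cross_int {E : Type*} [MeasureSpace E] [IsProbabilityMeasure (volume : Measure E)]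
    {m : ℕ} (u : E → ℝ) (hu : Integrable u) (hu2 : Integrable (fun p => u p * u p))
    (k l : Fin m) :
    Integrable (fun θ : Fin m → E => u (θ k) * u (θ l)) := by
  classical
  by_cases hkl : k = l
  · subst hkl
    set f : Fin m → E → ℝ := fun i => if i = k then fun p => u p * u p else fun _ => (1:ℝ) with hf
    have h : ∀ θ : Fin m → E, u (θ k) * u (θ k) = ∏ i, f i (θ i) := by
      intro θ
      rw [Finset.prod_eq_single k (fun i _ hik => by simp [hf, hik]) (by simp)]
      simp [hf]
    simp_rw [h]
    apply Integrable.fintype_prod (f := f)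
    intro i
    by_cases hik : i = k <;> simp [hf, hik, hu2, integrable_const]
  · set f : Fin m → E → ℝ := fun i => if i = k then u else if i = l then u else fun _ => (1:ℝ) with hf
    have h : ∀ θ : Fin m → E, u (θ k) * u (θ l) = ∏ i, f i (θ i) := by
      intro θ
      rw [← Finset.prod_subset (Finset.subset_univ ({k, l} : Finset (Fin m)))
        (fun i _ hi => by
          simp only [Finset.mem_insert, Finset.mem_singleton, not_or] at hi
          simp [hf, hi.1, hi.2])]
      rw [Finset.prod_pair hkl]
      simp [hf, fun h : l = k => hkl h.symm]
    simp_rw [h]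
    apply Integrable.fintype_prod (f := f)
    intro i
    by_cases hik : i = k
    · simp [hf, hik, hu]
    · by_cases hil : i = l <;> simp [hf, hik, hil, hu, integrable_const]

-- core: fixed x good
lemma core {E : Type*} [MeasureSpace E] [IsProbabilityMeasure (volume : Measure E)]
    {m : ℕ} (hm : 0 < m) (g : E → ℝ) (hg : Integrable g) (hg2 : Integrable (fun p => g p ^ 2))
    (B : ℝ) (hB : ∫ p, g p ^ 2 ≤ B) :
    Integrable (fun θ : Fin m → E => ((1 / (m:ℝ)) * ∑ k, g (θ k) - ∫ p, g p) ^ 2)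
      ∧ ∫ θ : Fin m → E, ((1 / (m:ℝ)) * ∑ k, g (θ k) - ∫ p, g p) ^ 2 ≤ B / m := by
  set μ : ℝ := ∫ p, g p with hμ
  set u : E → ℝ := fun p => g p - μ with hudef
  have hu : Integrable u := hg.sub (integrable_const μ)
  have hu2 : Integrable (fun p => u p * u p) := by
    have : (fun p => u p * u p) = fun p => g p ^ 2 - 2 * μ * g p + μ ^ 2 := by
      funext p; simp only [hudef]; ring
    rw [this]
    have hI1 : Integrable (fun p => g p ^ 2 - 2 * μ * g p) := hg2.sub (hg.const_mul (2*μ))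
    exact hI1.add (integrable_const _)
  have hu0 : ∫ p, u p = 0 := by
    rw [hudef]; rw [integral_sub hg (integrable_const μ)]; simp [hμ]
  have huval : ∫ p, u p * u p ≤ B := by
    have : (fun p => u p * u p) = fun p => g p ^ 2 - 2 * μ * g p + μ ^ 2 := by
      funext p; simp only [hudef]; ring
    have hI1 : Integrable (fun p => g p ^ 2 - 2 * μ * g p) := hg2.sub (hg.const_mul (2*μ))
    have hI2 : Integrable (fun _ : E => μ ^ 2) := integrable_const _
    have hI3 : Integrable (fun p => 2 * μ * g p) := hg.const_mul (2*μ)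
    rw [this, integral_add hI1 hI2, integral_sub hg2 hI3, integral_const_mul, integral_const]
    simp only [measure_univ, probReal_univ, ENNReal.toReal_one, smul_eq_mul, one_mul, ← hμ]
    nlinarith [sq_nonneg μ]
  -- rewrite the integrand
  have hexpand : ∀ θ : Fin m → E, ((1 / (m:ℝ)) * ∑ k, g (θ k) - μ) ^ 2
      = (1 / (m:ℝ)) ^ 2 * ∑ k : Fin m, ∑ l : Fin m, u (θ k) * u (θ l) := by
    intro θ
    have h1 : (1 / (m:ℝ)) * ∑ k, g (θ k) - μ = (1 / (m:ℝ)) * ∑ k, u (θ k) := by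
      rw [hudef]
      simp only [Finset.sum_sub_distrib, Finset.sum_const, Finset.card_univ, Fintype.card_fin,
        nsmul_eq_mul, mul_sub]
      have hmne : (m:ℝ) ≠ 0 := Nat.cast_ne_zero.mpr hm.ne'
      field_simp
    rw [h1, mul_pow]
    congr 1
    rw [sq, Finset.sum_mul_sum]
  have hint : Integrable (fun θ : Fin m → E =>
      ((1 / (m:ℝ)) * ∑ k, g (θ k) - μ) ^ 2) := by
    simp_rw [hexpand]
    apply Integrable.const_mul
    apply integrable_finset_sum
    intro k _
    apply integrable_finset_sum
    intro l _
    exact pi_cross_int u hu hu2 k l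
  refine ⟨hint, ?_⟩
  have : ∫ θ : Fin m → E, ((1 / (m:ℝ)) * ∑ k, g (θ k) - μ) ^ 2
      = (1 / (m:ℝ)) ^ 2 * ∑ k : Fin m, ∑ l : Fin m, ∫ θ : Fin m → E, u (θ k) * u (θ l) := by
    simp_rw [hexpand]
    rw [integral_const_mul]
    congr 1
    rw [integral_finset_sum _ (fun k _ => integrable_finset_sum _ (fun l _ => pi_cross_int u hu hu2 k l))]
    exact Finset.sum_congr rfl fun k _ =>
      integral_finset_sum _ (fun l _ => pi_cross_int u hu hu2 k l)
  rw [this]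
  have hdiagsum : ∀ k : Fin m, ∑ l : Fin m, ∫ θ : Fin m → E, u (θ k) * u (θ l)
      = ∫ p, u p * u p := by
    intro k
    rw [Finset.sum_eq_single k (fun l _ hlk => pi_cross u hu0 k l (Ne.symm hlk)) (by simp)]
    have : ∀ θ : Fin m → E, u (θ k) * u (θ k) = u (θ k) ^ 2 := fun θ => (sq _).symm
    simp_rw [this]
    rw [pi_diag u (by simpa [sq] using hu2) k]
    simp [sq]
  simp_rw [hdiagsum]
  rw [Finset.sum_const, Finset.card_univ, Fintype.card_fin, nsmul_eq_mul]
  have hmpos : (0:ℝ) < m := Nat.cast_pos.mpr hm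
  rw [div_eq_mul_inv B]
  calc (1 / (m:ℝ)) ^ 2 * ((m:ℝ) * ∫ p, u p * u p)
      = (∫ p, u p * u p) * (m:ℝ)⁻¹ := by field_simp
    _ ≤ B * (m:ℝ)⁻¹ := by
        apply mul_le_mul_of_nonneg_right huval (by positivity)

theorem monte_carlo_two_layer_approximation (d m : ℕ) (hm : 0 < m)
    (ρ : Measure (ℝ × (Fin d → ℝ))) [IsProbabilityMeasure ρ]
    (C : ℝ) (hC : C ^ 2 = ∫ p, p.1 ^ 2 * (∑ i, |p.2 i|) ^ 2 ∂ρ)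
    (hCint : Integrable (fun p => p.1 ^ 2 * (∑ i, |p.2 i|) ^ 2) ρ)
    (fstar : (Fin d → ℝ) → ℝ)
    (hfstar : ∀ x, fstar x = ∫ p, p.1 * max (∑ i, p.2 i * x i) 0 ∂ρ)
    (D : Measure (Fin d → ℝ)) [IsProbabilityMeasure D]
    (hD : ∀ᵐ x ∂D, ∀ i, x i ∈ Set.Icc (0:ℝ) 1) :
    (∫ θ : Fin m → ℝ × (Fin d → ℝ),
        ∫ x, ((1 / (m : ℝ)) * ∑ k, (θ k).1 * max (∑ i, (θ k).2 i * x i) 0 - fstar x) ^ 2 ∂D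
      ∂(Measure.pi fun _ : Fin m => ρ)) ≤ C ^ 2 / m := by
  letI : MeasureSpace (ℝ × (Fin d → ℝ)) := ⟨ρ⟩
  haveI : IsProbabilityMeasure (volume : Measure (ℝ × (Fin d → ℝ))) :=
    inferInstanceAs (IsProbabilityMeasure ρ)
  set π : Measure (Fin m → ℝ × (Fin d → ℝ)) := Measure.pi fun _ : Fin m => ρ with hπdef
  haveI : IsProbabilityMeasure π := by
    rw [hπdef]; infer_instance
  set F : (Fin m → ℝ × (Fin d → ℝ)) × (Fin d → ℝ) → ℝ := fun q =>
    ((1 / (m : ℝ)) * ∑ k, (q.1 k).1 * max (∑ i, (q.1 k).2 i * q.2 i) 0 - fstar q.2) ^ 2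
    with hFdef
  -- measurability of fstar
  have hfstarm : Measurable fstar := by
    have h0 : Continuous (fun z : (Fin d → ℝ) × (ℝ × (Fin d → ℝ)) =>
        z.2.1 * max (∑ i, z.2.2 i * z.1 i) 0) := by fun_prop
    have : fstar = fun x => ∫ p, (fun z : (Fin d → ℝ) × (ℝ × (Fin d → ℝ)) =>
        z.2.1 * max (∑ i, z.2.2 i * z.1 i) 0) (x, p) ∂ρ := funext hfstar
    rw [this]
    exact (h0.stronglyMeasurable.integral_prod_right').measurable
  have hFmeas : Measurable F := by
    have hS : Continuous (fun q : (Fin m → ℝ × (Fin d → ℝ)) × (Fin d → ℝ) =>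
        (1 / (m : ℝ)) * ∑ k, (q.1 k).1 * max (∑ i, (q.1 k).2 i * q.2 i) 0) := by fun_prop
    exact ((hS.measurable.sub (hfstarm.comp measurable_snd)).pow_const 2)
  have hFnn : ∀ q, 0 ≤ F q := fun q => sq_nonneg _
  -- the key bound at fixed good x
  have key : ∀ x : Fin d → ℝ, (∀ i, x i ∈ Set.Icc (0:ℝ) 1) →
      Integrable (fun θ => F (θ, x)) π ∧ ∫ θ, F (θ, x) ∂π ≤ C ^ 2 / m := by
    intro x hx
    set g : ℝ × (Fin d → ℝ) → ℝ := fun p => p.1 * max (∑ i, p.2 i * x i) 0 with hgdef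
    have hgc : Continuous g := by fun_prop
    have hmax : ∀ p : ℝ × (Fin d → ℝ), |max (∑ i, p.2 i * x i) 0| ≤ ∑ i, |p.2 i| := by
      intro p
      rw [abs_of_nonneg (le_max_right _ _)]
      apply max_le _ (Finset.sum_nonneg fun i _ => abs_nonneg _)
      calc ∑ i, p.2 i * x i ≤ ∑ i, |p.2 i * x i| :=
            Finset.sum_le_sum fun i _ => le_abs_self _
        _ ≤ ∑ i, |p.2 i| := by
            apply Finset.sum_le_sum
            intro i _
            rw [abs_mul]
            have h1 : |x i| ≤ 1 := abs_le.mpr ⟨le_trans (by norm_num) (hx i).1, (hx i).2⟩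
            calc |p.2 i| * |x i| ≤ |p.2 i| * 1 :=
                  mul_le_mul_of_nonneg_left h1 (abs_nonneg _)
              _ = |p.2 i| := mul_one _
    have hgle : ∀ p : ℝ × (Fin d → ℝ), |g p| ≤ |p.1| * ∑ i, |p.2 i| := by
      intro p
      rw [hgdef, abs_mul]
      exact mul_le_mul_of_nonneg_left (hmax p) (abs_nonneg _)
    have hgsq : ∀ p : ℝ × (Fin d → ℝ), g p ^ 2 ≤ p.1 ^ 2 * (∑ i, |p.2 i|) ^ 2 := by
      intro p
      have h1 : |g p| ^ 2 ≤ (|p.1| * ∑ i, |p.2 i|) ^ 2 :=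
        pow_le_pow_left₀ (abs_nonneg _) (hgle p) 2
      calc g p ^ 2 = |g p| ^ 2 := (sq_abs _).symm
        _ ≤ (|p.1| * ∑ i, |p.2 i|) ^ 2 := h1
        _ = p.1 ^ 2 * (∑ i, |p.2 i|) ^ 2 := by rw [mul_pow, sq_abs]
    have hg : Integrable g ρ := by
      apply Integrable.mono' (((integrable_const (1:ℝ)).add hCint).div_const 2)
        hgc.aestronglyMeasurable
      apply Filter.Eventually.of_forall
      intro p
      calc ‖g p‖ ≤ |p.1| * ∑ i, |p.2 i| := hgle p
        _ ≤ (1 + p.1 ^ 2 * (∑ i, |p.2 i|) ^ 2) / 2 := by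
            nlinarith [sq_nonneg (|p.1| * (∑ i, |p.2 i|) - 1), abs_nonneg p.1,
              Finset.sum_nonneg (fun i (_ : i ∈ Finset.univ) => abs_nonneg (p.2 i)),
              sq_abs p.1]
    have hg2 : Integrable (fun p => g p ^ 2) ρ := by
      apply Integrable.mono' hCint (hgc.pow 2).aestronglyMeasurable
      apply Filter.Eventually.of_forall
      intro p
      rw [Real.norm_eq_abs, abs_of_nonneg (sq_nonneg _)]
      exact hgsq p
    have hB : ∫ p, g p ^ 2 ∂ρ ≤ C ^ 2 := by
      rw [hC]
      exact integral_mono hg2 hCint hgsq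
    have hcore := core (E := ℝ × (Fin d → ℝ)) hm g hg hg2 (C ^ 2) hB
    have hFg : (fun θ : Fin m → ℝ × (Fin d → ℝ) => F (θ, x))
        = fun θ => ((1 / (m:ℝ)) * ∑ k, g (θ k) - ∫ p, g p) ^ 2 := by
      funext θ
      simp only [hFdef, hgdef, hfstar x]
      rfl
    rw [hFg]
    exact hcore
  -- outer plumbing
  have hC2nn : (0:ℝ) ≤ C ^ 2 / m := div_nonneg (sq_nonneg C) (Nat.cast_nonneg m)
  set B' : ENNReal := ENNReal.ofReal (C ^ 2 / m) with hB'def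
  set G : (Fin m → ℝ × (Fin d → ℝ)) → ENNReal :=
    fun θ => ∫⁻ x, ENNReal.ofReal (F (θ, x)) ∂D with hGdef
  have hGmeas : Measurable G :=
    Measurable.lintegral_prod_right (ENNReal.measurable_ofReal.comp hFmeas)
  have hswap : ∫⁻ θ, G θ ∂π = ∫⁻ x, ∫⁻ θ, ENNReal.ofReal (F (θ, x)) ∂π ∂D :=
    lintegral_lintegral_swap ((ENNReal.measurable_ofReal.comp hFmeas).aemeasurable)
  have hbound : ∀ᵐ x ∂D, ∫⁻ θ, ENNReal.ofReal (F (θ, x)) ∂π ≤ B' := by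
    filter_upwards [hD] with x hx
    obtain ⟨hint, hle⟩ := key x hx
    rw [← ofReal_integral_eq_lintegral_ofReal hint
      (Filter.Eventually.of_forall fun θ => hFnn _)]
    exact ENNReal.ofReal_le_ofReal hle
  have hN : ∫⁻ θ, G θ ∂π ≤ B' := by
    rw [hswap]
    calc ∫⁻ x, ∫⁻ θ, ENNReal.ofReal (F (θ, x)) ∂π ∂D ≤ ∫⁻ _, B' ∂D :=
          lintegral_mono_ae hbound
      _ = B' := by rw [lintegral_const, measure_univ, mul_one]
  have hNlt : ∫⁻ θ, G θ ∂π ≠ ⊤ := ne_top_of_le_ne_top ENNReal.ofReal_ne_top hN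
  have il : ∀ θ, ∫ x, F (θ, x) ∂D = (G θ).toReal := by
    intro θ
    rw [hGdef, integral_eq_lintegral_of_nonneg_ae
      (Filter.Eventually.of_forall fun x => hFnn (θ, x))
      ((hFmeas.comp measurable_prodMk_left).aestronglyMeasurable)]
  calc (∫ θ, ∫ x, F (θ, x) ∂D ∂π) = ∫ θ, (G θ).toReal ∂π := by simp_rw [il]
    _ = (∫⁻ θ, G θ ∂π).toReal :=
        integral_toReal hGmeas.aemeasurable (ae_lt_top hGmeas hNlt)
    _ ≤ B'.toReal := ENNReal.toReal_mono ENNReal.ofReal_ne_top hN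
    _ = C ^ 2 / m := ENNReal.toReal_ofReal hC2nn
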